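/- arXiv:1808.03230 — 2 statements merged into one kernel-verified Lean document; each statement's English description precedes it below -/
import Mathlib

section
/- The second derivative of the negative log-density of the Gaussian mixture π_σ = ½𝒩(−1,σ²) + ½𝒩(1,σ²) satisfies: for all x ∈ (−∞, −10σ) (with σ ≤ 1/100), d²/dx² (−log f_σ(x)) ≥ 1/(8σ²). In particular, f_σ is strongly log-concave on (−∞, −10σ) with parameter at least 1/(8σ²). -/
/-- For `σ ≤ 1/100`, the negative log-density of the mixture `½𝒩(−1,σ²) + ½𝒩(1,σ²)`
satisfies `(−log f_σ)''(x) ≥ 1/(8σ²)` for all `x < −10σ`: `f_σ` is strongly log-concave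
on `(−∞,−10σ)` with parameter at least `1/(8σ²)`. -/
theorem mixture_strong_logconcavity (σ : ℝ) (hσ : 0 < σ) (hσ' : σ ≤ 1 / 100)
    (f : ℝ → ℝ)
    (hf : ∀ x : ℝ, f x =
      (1 / (2 * Real.sqrt (2 * Real.pi) * σ)) *
        (Real.exp (-(x + 1) ^ 2 / (2 * σ ^ 2)) + Real.exp (-(x - 1) ^ 2 / (2 * σ ^ 2)))) :
    ∀ x : ℝ, x < -10 * σ →
      1 / (8 * σ ^ 2) ≤ deriv (deriv fun y => -Real.log (f y)) x := by
  intro x hx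
  have hs : (0:ℝ) < σ ^ 2 := by positivity
  have hsne : σ ^ 2 ≠ 0 := ne_of_gt hs
  set A : ℝ → ℝ := fun t => Real.exp (-(t + 1) ^ 2 / (2 * σ ^ 2)) with hAdef
  set B : ℝ → ℝ := fun t => Real.exp (-(t - 1) ^ 2 / (2 * σ ^ 2)) with hBdef
  have hApos : ∀ t, 0 < A t := fun t => Real.exp_pos _
  have hBpos : ∀ t, 0 < B t := fun t => Real.exp_pos _
  have hGpos : ∀ t, 0 < A t + B t := fun t => by positivity
  have hAd : ∀ y, HasDerivAt A (A y * (-(y + 1) / σ ^ 2)) y := by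
    intro y
    have h0 : HasDerivAt (fun t : ℝ => t + 1) 1 y := (hasDerivAt_id y).add_const 1
    have h1 := ((h0.pow 2).neg.div_const (2 * σ ^ 2)).exp
    convert h1 using 1
    · rfl
    show A y * (-(y + 1) / σ ^ 2) = A y * (-(((2:ℕ):ℝ) * (y + 1) ^ (2 - 1) * 1) / (2 * σ ^ 2))
    push_cast
    field_simp
  have hBd : ∀ y, HasDerivAt B (B y * (-(y - 1) / σ ^ 2)) y := by
    intro y
    have h0 : HasDerivAt (fun t : ℝ => t - 1) 1 y := (hasDerivAt_id y).sub_const 1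
    have h1 := ((h0.pow 2).neg.div_const (2 * σ ^ 2)).exp
    convert h1 using 1
    · rfl
    show B y * (-(y - 1) / σ ^ 2) = B y * (-(((2:ℕ):ℝ) * (y - 1) ^ (2 - 1) * 1) / (2 * σ ^ 2))
    push_cast
    field_simp
  set φ : ℝ → ℝ := fun y => ((y + 1) * A y + (y - 1) * B y) / (σ ^ 2 * (A y + B y)) with hφdef
  have hcpos : (0:ℝ) < 1 / (2 * Real.sqrt (2 * Real.pi) * σ) := by
    have : (0:ℝ) < Real.sqrt (2 * Real.pi) := Real.sqrt_pos.mpr (by positivity)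
    positivity
  have hderiv1 : ∀ y, HasDerivAt (fun t => -Real.log (f t)) (φ y) y := by
    intro y
    have hfF : (fun t => -Real.log (f t)) =
        fun t => -(Real.log (1 / (2 * Real.sqrt (2 * Real.pi) * σ)) + Real.log (A t + B t)) := by
      funext t
      rw [hf t, Real.log_mul (ne_of_gt hcpos) (ne_of_gt (hGpos t))]
    rw [hfF]
    have hG : HasDerivAt (fun t => A t + B t)
        (A y * (-(y + 1) / σ ^ 2) + B y * (-(y - 1) / σ ^ 2)) y := (hAd y).add (hBd y)
    have h2 := ((hasDerivAt_const y
        (Real.log (1 / (2 * Real.sqrt (2 * Real.pi) * σ)))).add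
        (hG.log (ne_of_gt (hGpos y)))).neg
    convert h2 using 1
    any_goals rfl
    rw [hφdef]
    have hA := (hApos y).ne'
    have hB := (hBpos y).ne'
    have hG' := (hGpos y).ne'
    field_simp
    ring
  have hd1 : deriv (fun y => -Real.log (f y)) = φ := funext fun y => (hderiv1 y).deriv
  rw [hd1]
  -- second derivative via quotient rule
  have hN : HasDerivAt (fun y => (y + 1) * A y + (y - 1) * B y)
      ((1 * A x + (x + 1) * (A x * (-(x + 1) / σ ^ 2))) +
       (1 * B x + (x - 1) * (B x * (-(x - 1) / σ ^ 2)))) x := by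
    exact ((((hasDerivAt_id x).add_const 1).mul (hAd x)).add
      (((hasDerivAt_id x).sub_const 1).mul (hBd x)))
  have hD : HasDerivAt (fun y => σ ^ 2 * (A y + B y))
      (σ ^ 2 * (A x * (-(x + 1) / σ ^ 2) + B x * (-(x - 1) / σ ^ 2))) x :=
    ((hAd x).add (hBd x)).const_mul (σ ^ 2)
  have hDne : σ ^ 2 * (A x + B x) ≠ 0 := by positivity
  have h2 := (hN.div hD hDne).deriv
  have hφd : deriv φ x =
      (((1 * A x + (x + 1) * (A x * (-(x + 1) / σ ^ 2))) +
        (1 * B x + (x - 1) * (B x * (-(x - 1) / σ ^ 2)))) * (σ ^ 2 * (A x + B x)) -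
       ((x + 1) * A x + (x - 1) * B x) *
        (σ ^ 2 * (A x * (-(x + 1) / σ ^ 2) + B x * (-(x - 1) / σ ^ 2)))) /
      (σ ^ 2 * (A x + B x)) ^ 2 := h2
  rw [hφd]
  -- key bound : B x ≤ (7/32) σ² A x
  have hBA : B x = A x * Real.exp (2 * x / σ ^ 2) := by
    have h : -(x - 1) ^ 2 / (2 * σ ^ 2) = -(x + 1) ^ 2 / (2 * σ ^ 2) + 2 * x / σ ^ 2 := by
      field_simp
      ring
    show Real.exp (-(x - 1) ^ 2 / (2 * σ ^ 2)) =
      Real.exp (-(x + 1) ^ 2 / (2 * σ ^ 2)) * Real.exp (2 * x / σ ^ 2)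
    rw [h, Real.exp_add]
  have hexp1 : Real.exp (2 * x / σ ^ 2) ≤ Real.exp (-(20 / σ)) := by
    apply Real.exp_le_exp.mpr
    rw [div_le_iff₀ hs]
    have : -(20 / σ) * σ ^ 2 = -20 * σ := by field_simp
    rw [this]
    nlinarith
  have hexp2 : Real.exp (-(20 / σ)) ≤ 7 / 32 * σ ^ 2 := by
    have hu : (0:ℝ) < 20 / σ := by positivity
    have h1 : 20 / σ / 2 + 1 ≤ Real.exp (20 / σ / 2) := Real.add_one_le_exp _
    have h2 : Real.exp (20 / σ / 2) * Real.exp (20 / σ / 2) = Real.exp (20 / σ) := by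
      rw [← Real.exp_add]; ring_nf
    have h3 : (20 / σ / 2) ^ 2 ≤ Real.exp (20 / σ) := by
      nlinarith [Real.exp_pos (20 / σ / 2)]
    have h4 : (100 : ℝ) / σ ^ 2 ≤ Real.exp (20 / σ) := by
      have : (20 / σ / 2) ^ 2 = 100 / σ ^ 2 := by field_simp; ring
      linarith [h3, this.symm.le]
    rw [Real.exp_neg]
    rw [inv_le_iff_one_le_mul₀ (Real.exp_pos _)]
    have h5 : 7 / 32 * σ ^ 2 * (100 / σ ^ 2) ≤ 7 / 32 * σ ^ 2 * Real.exp (20 / σ) := by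
      apply mul_le_mul_of_nonneg_left h4 (by positivity)
    have h6 : 7 / 32 * σ ^ 2 * (100 / σ ^ 2) = 700 / 32 := by field_simp; ring
    linarith
  have hkey : 32 * (A x * B x) ≤ 7 * σ ^ 2 * (A x + B x) ^ 2 := by
    have h1 : B x ≤ 7 / 32 * σ ^ 2 * A x := by
      rw [hBA]
      calc A x * Real.exp (2 * x / σ ^ 2) ≤ A x * (7 / 32 * σ ^ 2) := by
            apply mul_le_mul_of_nonneg_left (le_trans hexp1 hexp2) (hApos x).le
        _ = 7 / 32 * σ ^ 2 * A x := by ring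
    nlinarith [hApos x, hBpos x, sq_nonneg (A x - B x), sq_nonneg (B x)]
  -- final inequality
  rw [div_le_div_iff₀ (by positivity) (by positivity)]
  have hA := hApos x
  have hB := hBpos x
  have e1 : (((1 * A x + (x + 1) * (A x * (-(x + 1) / σ ^ 2))) +
        (1 * B x + (x - 1) * (B x * (-(x - 1) / σ ^ 2)))) * (σ ^ 2 * (A x + B x)) -
       ((x + 1) * A x + (x - 1) * B x) *
        (σ ^ 2 * (A x * (-(x + 1) / σ ^ 2) + B x * (-(x - 1) / σ ^ 2)))) =
      σ ^ 2 * (A x + B x) ^ 2 - 4 * (A x * B x) := by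
    field_simp
    ring
  rw [e1]
  have hkey2 : σ ^ 2 * (32 * (A x * B x)) ≤ σ ^ 2 * (7 * σ ^ 2 * (A x + B x) ^ 2) :=
    mul_le_mul_of_nonneg_left hkey hs.le
  calc 1 * (σ ^ 2 * (A x + B x)) ^ 2
      = 8 * σ ^ 2 * (σ ^ 2 * (A x + B x) ^ 2) - σ ^ 2 * (7 * σ ^ 2 * (A x + B x) ^ 2) := by
        ring
    _ ≤ 8 * σ ^ 2 * (σ ^ 2 * (A x + B x) ^ 2) - σ ^ 2 * (32 * (A x * B x)) := by
        linarith [hkey2]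
    _ = (σ ^ 2 * (A x + B x) ^ 2 - 4 * (A x * B x)) * (8 * σ ^ 2) := by ring
end

section
/- Let K be a Markov kernel with stationary probability measure π on a measurable space, let S, U be measurable sets with π(S) ≥ 12ε, π(S) ≤ 1/2, π(S Δ U) ≤ 3ε and ε < π(S)/100. Define Φ(K, A) = (∫_A K(x, Aᶜ) π(dx))/π(A). Then Φ(K, U) ≤ (Φ(K, S) + 6ε/π(S))·(1 + 6ε/π(S)). -/
open MeasureTheory ProbabilityTheory

/-- Conductance comparison for nearby sets: if `π(SΔU) ≤ 3ε`, `π(S) ≥ 12ε`,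
`π(S) ≤ 1/2` and `ε < π(S)/100`, then
`Φ(K,U) ≤ (Φ(K,S) + 6ε/π(S))·(1 + 6ε/π(S))`, where
`Φ(K,A) = (∫_A K(x,Aᶜ) dπ)/π(A)`. -/
theorem conductance_set_perturbation {α : Type*} [MeasurableSpace α]
    (K : Kernel α α) [IsMarkovKernel K]
    (π : Measure α) [IsProbabilityMeasure π]
    (hstat : π.bind (fun x => K x) = π)
    (S U : Set α) (hSm : MeasurableSet S) (hUm : MeasurableSet U)
    (ε : ℝ) (hε : 0 < ε)
    (hS12 : 12 * ε ≤ (π S).toReal) (hShalf : (π S).toReal ≤ 1 / 2)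
    (hSU : (π (symmDiff S U)).toReal ≤ 3 * ε) (hε' : ε < (π S).toReal / 100) :
    (∫ x in U, (K x Uᶜ).toReal ∂π) / (π U).toReal ≤
      ((∫ x in S, (K x Sᶜ).toReal ∂π) / (π S).toReal + 6 * ε / (π S).toReal) *
        (1 + 6 * ε / (π S).toReal) := by
  -- lintegral versions
  have hmeasU : Measurable fun x => K x Uᶜ := K.measurable_coe hUm.compl
  have hmeasS : Measurable fun x => K x Sᶜ := K.measurable_coe hSm.compl
  have hmeasSU : Measurable fun x => K x (S \ U) := K.measurable_coe (hSm.diff hUm)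
  -- rewrite Bochner integrals as lintegrals
  have hIU : (∫ x in U, (K x Uᶜ).toReal ∂π) = (∫⁻ x in U, K x Uᶜ ∂π).toReal := by
    rw [integral_toReal (hmeasU.aemeasurable) (ae_of_all _ fun x => measure_lt_top _ _)]
  have hIS : (∫ x in S, (K x Sᶜ).toReal ∂π) = (∫⁻ x in S, K x Sᶜ ∂π).toReal := by
    rw [integral_toReal (hmeasS.aemeasurable) (ae_of_all _ fun x => measure_lt_top _ _)]
  -- symmDiff measure split
  have hsymm : π (symmDiff S U) = π (S \ U) + π (U \ S) := by
    rw [Set.symmDiff_def]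
    exact measure_union (disjoint_sdiff_sdiff) (hUm.diff hSm)
  -- key lintegral bound
  have hpt : ∀ x, K x Uᶜ ≤ K x Sᶜ + K x (S \ U) := by
    intro x
    calc K x Uᶜ ≤ K x (Sᶜ ∪ (S \ U)) := by
          apply measure_mono
          intro y hy
          by_cases h : y ∈ S
          · exact Or.inr ⟨h, hy⟩
          · exact Or.inl h
      _ ≤ K x Sᶜ + K x (S \ U) := measure_union_le _ _
  have hstep1 : (∫⁻ x in U, K x Uᶜ ∂π) ≤ (∫⁻ x in U, K x Sᶜ ∂π) + (∫⁻ x in U, K x (S \ U) ∂π) := by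
    calc (∫⁻ x in U, K x Uᶜ ∂π) ≤ (∫⁻ x in U, K x Sᶜ + K x (S \ U) ∂π) :=
          lintegral_mono fun x => hpt x
      _ = _ := lintegral_add_left hmeasS _
  have hstep2 : (∫⁻ x in U, K x Sᶜ ∂π) ≤ (∫⁻ x in S, K x Sᶜ ∂π) + π (U \ S) := by
    calc (∫⁻ x in U, K x Sᶜ ∂π) ≤ (∫⁻ x in S ∪ (U \ S), K x Sᶜ ∂π) :=
          lintegral_mono_set (by intro y hy; by_cases h : y ∈ S
                                 · exact Or.inl h
                                 · exact Or.inr ⟨hy, h⟩)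
      _ = (∫⁻ x in S, K x Sᶜ ∂π) + (∫⁻ x in U \ S, K x Sᶜ ∂π) :=
          lintegral_union (hUm.diff hSm) disjoint_sdiff_self_right
      _ ≤ (∫⁻ x in S, K x Sᶜ ∂π) + π (U \ S) := by
          gcongr
          calc (∫⁻ x in U \ S, K x Sᶜ ∂π) ≤ (∫⁻ _ in U \ S, (1 : ENNReal) ∂π) :=
                lintegral_mono fun x => prob_le_one
            _ = π (U \ S) := setLIntegral_one _
  have hstep3 : (∫⁻ x in U, K x (S \ U) ∂π) ≤ π (S \ U) := by
    calc (∫⁻ x in U, K x (S \ U) ∂π) ≤ (∫⁻ x, K x (S \ U) ∂π) :=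
          setLIntegral_le_lintegral _ _
      _ = (π.bind (fun x => K x)) (S \ U) :=
          (Measure.bind_apply (hSm.diff hUm) K.measurable.aemeasurable).symm
      _ = π (S \ U) := by rw [hstat]
  have hkey : (∫⁻ x in U, K x Uᶜ ∂π) ≤ (∫⁻ x in S, K x Sᶜ ∂π) + π (symmDiff S U) := by
    rw [hsymm]
    calc (∫⁻ x in U, K x Uᶜ ∂π) ≤ ((∫⁻ x in S, K x Sᶜ ∂π) + π (U \ S)) + π (S \ U) :=
          le_trans hstep1 (add_le_add hstep2 hstep3)
      _ = (∫⁻ x in S, K x Sᶜ ∂π) + (π (S \ U) + π (U \ S)) := by ring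
  -- finiteness
  have hLS_fin : (∫⁻ x in S, K x Sᶜ ∂π) ≠ ⊤ := by
    apply ne_top_of_le_ne_top (measure_ne_top π S)
    calc (∫⁻ x in S, K x Sᶜ ∂π) ≤ (∫⁻ _ in S, (1 : ENNReal) ∂π) :=
          lintegral_mono fun x => prob_le_one
      _ = π S := setLIntegral_one _
  -- real version of key bound
  have hkeyR : (∫⁻ x in U, K x Uᶜ ∂π).toReal ≤
      (∫⁻ x in S, K x Sᶜ ∂π).toReal + (π (symmDiff S U)).toReal := by
    rw [← ENNReal.toReal_add hLS_fin (measure_ne_top _ _)]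
    exact ENNReal.toReal_mono (ENNReal.add_ne_top.2 ⟨hLS_fin, measure_ne_top _ _⟩) hkey
  -- measure comparison
  have hmeasR : (π S).toReal ≤ (π U).toReal + (π (symmDiff S U)).toReal := by
    rw [← ENNReal.toReal_add (measure_ne_top _ _) (measure_ne_top _ _)]
    apply ENNReal.toReal_mono (ENNReal.add_ne_top.2 ⟨measure_ne_top _ _, measure_ne_top _ _⟩)
    calc π S ≤ π (U ∪ symmDiff S U) := by
          apply measure_mono
          intro y hy
          by_cases h : y ∈ U
          · exact Or.inl h
          · exact Or.inr (Or.inl ⟨hy, h⟩)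
      _ ≤ π U + π (symmDiff S U) := measure_union_le _ _
  -- now pure real arithmetic
  rw [hIU, hIS]
  set s := (π S).toReal with hs_def
  set u := (π U).toReal with hu_def
  set d := (π (symmDiff S U)).toReal with hd_def
  set nU := (∫⁻ x in U, K x Uᶜ ∂π).toReal with hnU_def
  set nS := (∫⁻ x in S, K x Sᶜ ∂π).toReal with hnS_def
  have hnU0 : 0 ≤ nU := ENNReal.toReal_nonneg
  have hnS0 : 0 ≤ nS := ENNReal.toReal_nonneg
  have hd0 : 0 ≤ d := ENNReal.toReal_nonneg
  have hs_pos : 0 < s := by linarith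
  have hu_pos : 0 < u := by linarith
  have hs3 : 0 < s - 3 * ε := by linarith
  have h1 : nU / u ≤ (nS + 3 * ε) / (s - 3 * ε) := by
    apply div_le_div₀ (by linarith) (by linarith) hs3 (by linarith)
  have h2 : (nS / s + 6 * ε / s) * (1 + 6 * ε / s) = (nS + 6 * ε) * (s + 6 * ε) / (s * s) := by
    field_simp
  have h3 : (nS + 3 * ε) / (s - 3 * ε) ≤ (nS + 6 * ε) * (s + 6 * ε) / (s * s) := by
    rw [div_le_div_iff₀ hs3 (by positivity)]
    nlinarith [mul_nonneg (mul_nonneg hε.le hnS0) (by linarith : (0:ℝ) ≤ s - 6 * ε),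
      mul_nonneg (mul_nonneg hε.le hε.le) (by linarith : (0:ℝ) ≤ s - 12 * ε),
      mul_nonneg hε.le (mul_nonneg (by linarith : (0:ℝ) ≤ s) (by linarith : (0:ℝ) ≤ s - 12*ε)),
      mul_pos hε hε, sq_nonneg (s - 12 * ε)]
  rw [h2]
  exact le_trans h1 h3
end
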